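/- Let X ∈ ℝ^{n×p} have rows x₁ᵀ,…,x_nᵀ, and let A ∈ ℝ^{n×(n−p)} have orthonormal columns spanning the orthogonal complement of the column space of X (so AᵀA = I_{n−p} and AᵀX = 0). For 0 < t ≤ z ≤ n, define W_t := A_{(0,t]}ᵀ X_{(0,t]} − A_{(t,n]}ᵀ X_{(t,n]}, where the subscripts denote the submatrices of rows indexed by {1,…,t} and {t+1,…,n} respectively. If S_{a,b} := ∑_{i=a+1}^{b} x_i x_iᵀ and S_{0,n} = XᵀX is invertible, then W_tᵀ W_z = 4 S_{0,t} S_{0,n}^{−1} S_{z,n}. -/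
import Mathlib

open Matrix
open scoped BigOperators

lemma sum_vecMulVec_filter {n p q : ℕ} (M : Matrix (Fin n) (Fin p) ℝ)
    (N : Matrix (Fin n) (Fin q) ℝ) (P : Fin n → Prop) [DecidablePred P] :
    ∑ i ∈ Finset.univ.filter P, vecMulVec (M i) (N i)
      = Mᵀ * (Matrix.diagonal fun i => if P i then (1:ℝ) else 0) * N := by
  ext k l
  rw [Matrix.mul_apply]
  simp only [Matrix.mul_diagonal, Matrix.transpose_apply]
  simp [Finset.sum_filter, vecMulVec_apply, Matrix.sum_apply, ite_mul, mul_ite]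

/-- With `X ∈ ℝ^{n×p}`, `A ∈ ℝ^{n×(n-p)}` having orthonormal columns spanning the orthogonal
complement of the column space of `X` (`AᵀA = I`, `AᵀX = 0`, `AAᵀ = I - X(XᵀX)⁻¹Xᵀ`),
`S_{a,b} := ∑_{a < i ≤ b} x_i x_iᵀ`, and
`W_t := A_{(0,t]}ᵀ X_{(0,t]} - A_{(t,n]}ᵀ X_{(t,n]}`, one has, for `0 < t ≤ z ≤ n`,
`W_tᵀ W_z = 4 S_{0,t} S_{0,n}⁻¹ S_{z,n}`. -/
theorem stmt5 (n p t z : ℕ) (hpn : p < n) (ht : 0 < t) (htz : t ≤ z) (hzn : z ≤ n)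
    (X : Matrix (Fin n) (Fin p) ℝ) (A : Matrix (Fin n) (Fin (n - p)) ℝ)
    (hAA : Aᵀ * A = 1) (hAX : Aᵀ * X = 0)
    (hproj : A * Aᵀ = 1 - X * (Xᵀ * X)⁻¹ * Xᵀ)
    (hinv : IsUnit (Xᵀ * X).det) :
    (fun (W : ℕ → Matrix (Fin (n - p)) (Fin p) ℝ)
         (S : ℕ → ℕ → Matrix (Fin p) (Fin p) ℝ) =>
        (W t)ᵀ * W z = (4 : ℝ) • (S 0 t * (Xᵀ * X)⁻¹ * S z n))
      (fun s =>
        (∑ i ∈ Finset.univ.filter (fun i : Fin n => (i : ℕ) < s),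
            vecMulVec (A i) (X i)) -
          ∑ i ∈ Finset.univ.filter (fun i : Fin n => s ≤ (i : ℕ)),
            vecMulVec (A i) (X i))
      (fun a b =>
        ∑ i ∈ Finset.univ.filter (fun i : Fin n => a ≤ (i : ℕ) ∧ (i : ℕ) < b),
          vecMulVec (X i) (X i)) := by
  dsimp only
  set D : ℕ → Matrix (Fin n) (Fin n) ℝ :=
    fun s => Matrix.diagonal (fun i : Fin n => if (i : ℕ) < s then (1:ℝ) else 0) with hD
  -- W s = 2 • (Aᵀ * D s * X)
  have hW : ∀ s : ℕ,
      ((∑ i ∈ Finset.univ.filter (fun i : Fin n => (i : ℕ) < s), vecMulVec (A i) (X i)) -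
        ∑ i ∈ Finset.univ.filter (fun i : Fin n => s ≤ (i : ℕ)), vecMulVec (A i) (X i))
      = (2:ℝ) • (Aᵀ * D s * X) := by
    intro s
    rw [sum_vecMulVec_filter, sum_vecMulVec_filter]
    have h1 : (Matrix.diagonal fun i : Fin n => if s ≤ (i : ℕ) then (1:ℝ) else 0)
        = 1 - D s := by
      ext i j
      simp only [hD, Matrix.sub_apply, Matrix.one_apply, Matrix.diagonal_apply]
      split_ifs <;> first | (exfalso; omega) | norm_num
    rw [h1, Matrix.mul_sub, Matrix.mul_one, Matrix.sub_mul, hAX, zero_sub,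
      sub_neg_eq_add, two_smul]
  rw [hW t, hW z]
  -- S 0 t = Xᵀ * D t * X
  have hS0 : ∀ s : ℕ,
      (∑ i ∈ Finset.univ.filter (fun i : Fin n => 0 ≤ (i : ℕ) ∧ (i : ℕ) < s),
        vecMulVec (X i) (X i)) = Xᵀ * D s * X := by
    intro s
    rw [sum_vecMulVec_filter]
    congr 2
    simp only [hD]
    congr 1
    funext i
    simp [Nat.zero_le]
  have hSz :
      (∑ i ∈ Finset.univ.filter (fun i : Fin n => z ≤ (i : ℕ) ∧ (i : ℕ) < n),
        vecMulVec (X i) (X i)) = Xᵀ * (1 - D z) * X := by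
    rw [sum_vecMulVec_filter]
    congr 2
    ext i j
    have hi := i.isLt
    simp only [hD, Matrix.sub_apply, Matrix.one_apply, Matrix.diagonal_apply]
    split_ifs <;> first | (exfalso; omega) | norm_num
  rw [hS0 t, hSz]
  -- LHS algebra
  rw [Matrix.transpose_smul, Matrix.smul_mul, Matrix.mul_smul, smul_smul]
  have h22 : (2:ℝ) * 2 = 4 := by norm_num
  rw [h22]
  have hfun : (fun i : Fin n => (if (i:ℕ) < t then (1:ℝ) else 0) *
      (if (i:ℕ) < z then 1 else 0))
      = fun i : Fin n => if (i:ℕ) < t then (1:ℝ) else 0 := by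
    funext i
    split_ifs <;> first | (exfalso; omega) | norm_num
  have hDt : D t * D z = D t := by
    simp only [hD, Matrix.diagonal_mul_diagonal, hfun]
  have key : (Aᵀ * D t * X)ᵀ * (Aᵀ * D z * X)
      = Xᵀ * D t * X - Xᵀ * D t * X * (Xᵀ * X)⁻¹ * (Xᵀ * D z * X) := by
    have h2 : (Aᵀ * D t * X)ᵀ * (Aᵀ * D z * X) = Xᵀ * D t * (A * Aᵀ) * (D z * X) := by
      simp only [Matrix.transpose_mul, Matrix.transpose_transpose, hD,
        Matrix.diagonal_transpose]
      simp only [Matrix.mul_assoc]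
    rw [h2, hproj, Matrix.mul_sub, Matrix.mul_one, Matrix.sub_mul]
    have h3 : Xᵀ * D t * (D z * X) = Xᵀ * D t * X := by
      rw [← Matrix.mul_assoc, Matrix.mul_assoc Xᵀ, hDt]
    rw [h3]
    simp only [Matrix.mul_assoc]
  have rhs : Xᵀ * D t * X * (Xᵀ * X)⁻¹ * (Xᵀ * (1 - D z) * X)
      = Xᵀ * D t * X - Xᵀ * D t * X * (Xᵀ * X)⁻¹ * (Xᵀ * D z * X) := by
    have h4 : Xᵀ * (1 - D z) * X = Xᵀ * X - Xᵀ * D z * X := by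
      rw [Matrix.mul_sub, Matrix.mul_one, Matrix.sub_mul]
    rw [h4, Matrix.mul_sub]
    congr 1
    rw [Matrix.mul_assoc (Xᵀ * D t * X), Matrix.nonsing_inv_mul _ hinv, Matrix.mul_one]
  rw [key, rhs]
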